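/- Under the frame setup with S, v of class C², for all coordinate indices α, β one has the pointwise curvature identity ∂_α A_β − ∂_β A_α = Im( ψ_α · conj(ψ_β) ). -/

import Mathlib

open Matrix

/-- Partial derivative of `f` in the `α`-th coordinate direction. -/
noncomputable def pd {n : ℕ} {E : Type*} [NormedAddCommGroup E] [NormedSpace ℝ E]
    (f : (Fin n → ℝ) → E) (α : Fin n) (p : Fin n → ℝ) : E :=
  fderiv ℝ f p (Pi.single α 1)

/-- The complexified differentiated field `ψ_α = ⟨v, ∂_α S⟩ + i ⟨w, ∂_α S⟩`. -/
noncomputable def framePsi {n : ℕ} (S v w : (Fin n → ℝ) → Fin 3 → ℝ) (α : Fin n)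
    (p : Fin n → ℝ) : ℂ :=
  ((v p ⬝ᵥ pd S α p : ℝ) : ℂ) + Complex.I * ((w p ⬝ᵥ pd S α p : ℝ) : ℂ)

/-- The real connection coefficient `A_α = ⟨w, ∂_α v⟩`. -/
noncomputable def frameA {n : ℕ} (v w : (Fin n → ℝ) → Fin 3 → ℝ) (α : Fin n)
    (p : Fin n → ℝ) : ℝ :=
  w p ⬝ᵥ pd v α p

section helpers

variable {n : ℕ} {F G : Type*} [NormedAddCommGroup F] [NormedSpace ℝ F]
  [NormedAddCommGroup G] [NormedSpace ℝ G]

lemma pd_clm {f : (Fin n → ℝ) → F} (L : F →L[ℝ] G) {p : Fin n → ℝ}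
    (hf : DifferentiableAt ℝ f p) (α : Fin n) :
    pd (fun q => L (f q)) α p = L (pd f α p) := by
  unfold pd
  change fderiv ℝ (⇑L ∘ f) p (Pi.single α 1) = _
  rw [(L.hasFDerivAt.comp p hf.hasFDerivAt).fderiv]
  rfl

lemma pd_dot {f g : (Fin n → ℝ) → Fin 3 → ℝ} {p : Fin n → ℝ} (α : Fin n)
    (hf : DifferentiableAt ℝ f p) (hg : DifferentiableAt ℝ g p) :
    pd (fun q => f q ⬝ᵥ g q) α p = pd f α p ⬝ᵥ g p + f p ⬝ᵥ pd g α p := by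
  have hfi : ∀ i, DifferentiableAt ℝ (fun q => f q i) p := fun i =>
    (ContinuousLinearMap.proj (R := ℝ) (φ := fun _ : Fin 3 => ℝ) i).differentiableAt.comp p hf
  have hgi : ∀ i, DifferentiableAt ℝ (fun q => g q i) p := fun i =>
    (ContinuousLinearMap.proj (R := ℝ) (φ := fun _ : Fin 3 => ℝ) i).differentiableAt.comp p hg
  have h1 : (fun q => f q ⬝ᵥ g q) = fun q => ∑ i : Fin 3, f q i * g q i := by
    funext q; simp [dotProduct]
  have hpi : ∀ (h : (Fin n → ℝ) → Fin 3 → ℝ), DifferentiableAt ℝ h p →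
      ∀ i, pd (fun q => h q i) α p = pd h α p i := by
    intro h hh i
    exact pd_clm (ContinuousLinearMap.proj (R := ℝ) (φ := fun _ : Fin 3 => ℝ) i) hh α
  rw [h1]
  unfold pd
  rw [fderiv_fun_sum (A := fun i q => f q i * g q i) (fun i _ => ((hfi i).mul (hgi i)))]
  simp only [ContinuousLinearMap.coe_sum', Finset.sum_apply]
  have : ∀ i : Fin 3, fderiv ℝ (fun q => f q i * g q i) p (Pi.single α 1)
      = pd f α p i * g p i + f p i * pd g α p i := by
    intro i
    rw [fderiv_fun_mul (hfi i) (hgi i)]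
    have e1 := hpi f hf i
    have e2 := hpi g hg i
    simp only [pd] at e1 e2
    simp only [ContinuousLinearMap.add_apply, ContinuousLinearMap.smul_apply, smul_eq_mul, pd]
    rw [e1, e2]
    ring
  simp only [this]
  simp only [pd, dotProduct, Finset.sum_add_distrib]

lemma contDiff_pd {f : (Fin n → ℝ) → F} (hf : ContDiff ℝ 2 f) (β : Fin n) :
    ContDiff ℝ 1 (pd f β) := by
  have h := hf.fderiv_right (m := 1) (by norm_num)
  exact (ContinuousLinearMap.apply ℝ F (Pi.single β (1:ℝ))).contDiff.comp h

lemma pd_comm {f : (Fin n → ℝ) → F} (hf : ContDiff ℝ 2 f) (α β : Fin n) (p : Fin n → ℝ) :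
    pd (pd f β) α p = pd (pd f α) β p := by
  have hd : ∀ y, HasFDerivAt f (fderiv ℝ f y) y := fun y =>
    ((hf.differentiable (by norm_num)) y).hasFDerivAt
  have h1 : ContDiff ℝ 1 (fderiv ℝ f) := hf.fderiv_right (m := 1) (by norm_num)
  have h2 : HasFDerivAt (fderiv ℝ f) (fderiv ℝ (fderiv ℝ f) p) p :=
    ((h1.differentiable (by norm_num)) p).hasFDerivAt
  have hsym := second_derivative_symmetric hd h2 (Pi.single α 1) (Pi.single β 1)
  have key : ∀ γ δ : Fin n, pd (pd f δ) γ p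
      = fderiv ℝ (fderiv ℝ f) p (Pi.single γ 1) (Pi.single δ 1) := by
    intro γ δ
    have e : pd f δ = fun q =>
        (ContinuousLinearMap.apply ℝ F (Pi.single δ (1:ℝ))) (fderiv ℝ f q) := rfl
    rw [show pd (pd f δ) γ p = pd (fun q =>
        (ContinuousLinearMap.apply ℝ F (Pi.single δ (1:ℝ))) (fderiv ℝ f q)) γ p from by rw [← e]]
    rw [pd_clm (ContinuousLinearMap.apply ℝ F (Pi.single δ (1:ℝ))) ((h1.differentiable (by norm_num)) p) γ]
    rfl
  rw [key α β, key β α, hsym]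

lemma pd_dot_const {f g : (Fin n → ℝ) → Fin 3 → ℝ} (hf : Differentiable ℝ f)
    (hg : Differentiable ℝ g) {c : ℝ} (h : ∀ q, f q ⬝ᵥ g q = c) (α : Fin n) (p : Fin n → ℝ) :
    pd f α p ⬝ᵥ g p + f p ⬝ᵥ pd g α p = 0 := by
  have h0 : pd (fun q => f q ⬝ᵥ g q) α p = 0 := by
    rw [show (fun q => f q ⬝ᵥ g q) = fun _ => c from funext h]
    simp [pd]
  rw [← pd_dot α (hf p) (hg p), h0]

lemma cross_complete (s t x y : Fin 3 → ℝ) (hs : s ⬝ᵥ s = 1) (ht : t ⬝ᵥ t = 1)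
    (hst : s ⬝ᵥ t = 0) :
    x ⬝ᵥ y = (s ⬝ᵥ x) * (s ⬝ᵥ y) + (t ⬝ᵥ x) * (t ⬝ᵥ y)
      + (crossProduct s t ⬝ᵥ x) * (crossProduct s t ⬝ᵥ y) := by
  have key : (crossProduct s t ⬝ᵥ x) * (crossProduct s t ⬝ᵥ y) =
      (s ⬝ᵥ s) * ((t ⬝ᵥ t) * (x ⬝ᵥ y) - (t ⬝ᵥ y) * (x ⬝ᵥ t))
      - (s ⬝ᵥ t) * ((s ⬝ᵥ t) * (x ⬝ᵥ y) - (t ⬝ᵥ y) * (s ⬝ᵥ x))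
      + (s ⬝ᵥ y) * ((s ⬝ᵥ t) * (x ⬝ᵥ t) - (t ⬝ᵥ t) * (s ⬝ᵥ x)) := by
    simp [cross_apply, dotProduct, Fin.sum_univ_three]
    ring
  rw [key, hs, ht, hst, dotProduct_comm x t]
  ring

end helpers

/-- Curvature identity `∂_α A_β − ∂_β A_α = Im(ψ_α conj(ψ_β))`. -/
theorem frame_curvature_identity {n : ℕ}
    (S v : (Fin n → ℝ) → Fin 3 → ℝ)
    (hS : ContDiff ℝ 2 S) (hv : ContDiff ℝ 2 v)
    (hS1 : ∀ p, S p ⬝ᵥ S p = 1) (hv1 : ∀ p, v p ⬝ᵥ v p = 1)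
    (hSv : ∀ p, S p ⬝ᵥ v p = 0)
    (w : (Fin n → ℝ) → Fin 3 → ℝ) (hw : ∀ p, w p = crossProduct (S p) (v p)) :
    ∀ (α β : Fin n) (p : Fin n → ℝ),
      pd (frameA v w β) α p - pd (frameA v w α) β p =
        (framePsi S v w α p * (starRingEnd ℂ) (framePsi S v w β p)).im := by
  intro α β p
  -- component smoothness
  have hSc : ∀ i, ContDiff ℝ 2 (fun q => S q i) := fun i => (contDiff_pi.mp hS i)
  have hvc : ∀ i, ContDiff ℝ 2 (fun q => v q i) := fun i => (contDiff_pi.mp hv i)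
  -- smoothness of w
  have hwdef : w = fun q => crossProduct (S q) (v q) := funext hw
  have hw2 : ContDiff ℝ 2 w := by
    rw [hwdef]
    rw [contDiff_pi]
    intro i
    fin_cases i <;>
      simp only [cross_apply, Matrix.cons_val_zero, Matrix.cons_val_one, Matrix.head_cons,
        Matrix.cons_val_two, Matrix.tail_cons] <;>
      exact ((hSc _).mul (hvc _)).sub ((hSc _).mul (hvc _))
  -- basic differentiability
  have hSd : Differentiable ℝ S := hS.differentiable (by norm_num)
  have hvd : Differentiable ℝ v := hv.differentiable (by norm_num)
  have hwd : Differentiable ℝ w := hw2.differentiable (by norm_num)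
  have hpdS : ∀ γ, Differentiable ℝ (pd S γ) := fun γ => (contDiff_pd hS γ).differentiable (by norm_num)
  have hpdv : ∀ γ, Differentiable ℝ (pd v γ) := fun γ => (contDiff_pd hv γ).differentiable (by norm_num)
  have hpdw : ∀ γ, Differentiable ℝ (pd w γ) := fun γ => (contDiff_pd hw2 γ).differentiable (by norm_num)
  -- abbreviations
  set a : Fin n → ℝ := fun γ => v p ⬝ᵥ pd S γ p with ha
  set b : Fin n → ℝ := fun γ => w p ⬝ᵥ pd S γ p with hb
  set A : Fin n → ℝ := fun γ => w p ⬝ᵥ pd v γ p with hA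
  -- pointwise algebraic identities for w
  have hSw : ∀ q, S q ⬝ᵥ w q = 0 := by
    intro q; rw [hw q]
    simp [cross_apply, dotProduct, Fin.sum_univ_three]; ring
  have hvw : ∀ q, v q ⬝ᵥ w q = 0 := by
    intro q; rw [hw q]
    simp [cross_apply, dotProduct, Fin.sum_univ_three]; ring
  have hww : ∀ q, w q ⬝ᵥ w q = 1 := by
    intro q; rw [hw q]
    have key : crossProduct (S q) (v q) ⬝ᵥ crossProduct (S q) (v q)
        = (S q ⬝ᵥ S q) * (v q ⬝ᵥ v q) - (S q ⬝ᵥ v q) ^ 2 := by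
      simp [cross_apply, dotProduct, Fin.sum_univ_three]; ring
    rw [key, hS1 q, hv1 q, hSv q]; ring
  -- derivative orthogonality relations
  have r1 : ∀ γ, S p ⬝ᵥ pd v γ p = -(a γ) := by
    intro γ
    have := pd_dot_const hSd hvd hSv γ p
    have h2 : pd S γ p ⬝ᵥ v p = a γ := dotProduct_comm _ _
    linarith [this, h2.symm ▸ this]
  have r2 : ∀ γ, v p ⬝ᵥ pd v γ p = 0 := by
    intro γ
    have := pd_dot_const hvd hvd hv1 γ p
    have h2 : pd v γ p ⬝ᵥ v p = v p ⬝ᵥ pd v γ p := dotProduct_comm _ _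
    linarith
  have r3 : ∀ γ, S p ⬝ᵥ pd w γ p = -(b γ) := by
    intro γ
    have := pd_dot_const hSd hwd hSw γ p
    have h2 : pd S γ p ⬝ᵥ w p = b γ := dotProduct_comm _ _
    linarith
  have r4 : ∀ γ, v p ⬝ᵥ pd w γ p = -(A γ) := by
    intro γ
    have := pd_dot_const hvd hwd hvw γ p
    have h2 : pd v γ p ⬝ᵥ w p = A γ := dotProduct_comm _ _
    linarith
  have r5 : ∀ γ, w p ⬝ᵥ pd w γ p = 0 := by
    intro γ
    have := pd_dot_const hwd hwd hww γ p
    have h2 : pd w γ p ⬝ᵥ w p = w p ⬝ᵥ pd w γ p := dotProduct_comm _ _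
    linarith
  -- key dot product evaluation
  have keydot : ∀ γ δ, pd w γ p ⬝ᵥ pd v δ p = b γ * a δ := by
    intro γ δ
    have hc := cross_complete (S p) (v p) (pd w γ p) (pd v δ p) (hS1 p) (hv1 p) (hSv p)
    rw [← hw p] at hc
    rw [hc, r1 δ, r3 γ, r4 γ, r2 δ]
    have h5 : w p ⬝ᵥ pd w γ p = 0 := r5 γ
    rw [h5]
    ring
  -- expand pd of frameA
  have expand : ∀ γ δ, pd (frameA v w δ) γ p
      = pd w γ p ⬝ᵥ pd v δ p + w p ⬝ᵥ pd (pd v δ) γ p := by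
    intro γ δ
    have : frameA v w δ = fun q => w q ⬝ᵥ pd v δ q := rfl
    rw [this, pd_dot γ (hwd p) (hpdv δ p)]
  rw [expand α β, expand β α, keydot α β, keydot β α, pd_comm hv α β p]
  -- right-hand side
  have hpsi : ∀ γ, framePsi S v w γ p = ((a γ : ℝ) : ℂ) + Complex.I * ((b γ : ℝ) : ℂ) :=
    fun γ => rfl
  rw [hpsi α, hpsi β]
  simp only [map_add, _root_.map_mul, Complex.conj_I, Complex.conj_ofReal, Complex.add_im,
    Complex.add_re, Complex.mul_im, Complex.mul_re, Complex.I_re, Complex.I_im,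
    Complex.ofReal_re, Complex.ofReal_im, Complex.neg_re, Complex.neg_im]
  ring
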